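/- If n > d ≥ 1, then P(n+1, d) ≥ (⌊n/d⌋ + 1) · P(n, d). -/
import Mathlib


/-- The Chebyshev distance between two permutations of `{1,…,n}`
(represented as permutations of `Fin n`): `max_i |σ(i) − τ(i)|`. -/
def permDist {n : ℕ} (σ τ : Equiv.Perm (Fin n)) : ℕ :=
  Finset.univ.sup fun i => Nat.dist (σ i : ℕ) (τ i : ℕ)

/-- `P n d` is the maximum cardinality of a set of permutations of `{1,…,n}`
whose pairwise Chebyshev distance is at least `d`. -/
noncomputable def P (n d : ℕ) : ℕ :=
  sSup {k | ∃ A : Finset (Equiv.Perm (Fin n)),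
    (∀ σ ∈ A, ∀ τ ∈ A, σ ≠ τ → d ≤ permDist σ τ) ∧ A.card = k}

lemma rmul_le (n d : ℕ) (r : Fin (n / d + 1)) : r.val * d ≤ n := by
  have h1 : r.val ≤ n / d := Nat.lt_succ_iff.mp r.isLt
  calc r.val * d ≤ (n / d) * d := Nat.mul_le_mul_right d h1
    _ ≤ n := Nat.div_mul_le_self n d

/-- The extension map: given `σ : Perm (Fin n)` and `r`, build a function on
`Fin (n+1)` sending the last index to value `r*d` and shifting values `≥ r*d` up. -/
def fAux (n d : ℕ) (r : Fin (n / d + 1)) (σ : Equiv.Perm (Fin n)) :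
    Fin (n + 1) → Fin (n + 1) := fun i =>
  if h : (i : ℕ) < n then
    if (σ ⟨i, h⟩ : ℕ) < r.val * d then ⟨(σ ⟨i, h⟩ : ℕ), by omega⟩
    else ⟨(σ ⟨i, h⟩ : ℕ) + 1, by have := (σ ⟨i, h⟩).isLt; omega⟩
  else ⟨r.val * d, by have := rmul_le n d r; omega⟩

lemma fAux_inj (n d : ℕ) (r : Fin (n / d + 1)) (σ : Equiv.Perm (Fin n)) :
    Function.Injective (fAux n d r σ) := by
  intro i j hij
  unfold fAux at hij
  by_cases hi : (i : ℕ) < n <;> by_cases hj : (j : ℕ) < n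
  · rw [dif_pos hi, dif_pos hj] at hij
    have hval : (σ ⟨i, hi⟩ : ℕ) = (σ ⟨j, hj⟩ : ℕ) := by
      by_cases h1 : (σ ⟨i, hi⟩ : ℕ) < r.val * d <;>
        by_cases h2 : (σ ⟨j, hj⟩ : ℕ) < r.val * d <;>
        simp [h1, h2, Fin.mk.injEq] at hij <;> omega
    have : σ ⟨i, hi⟩ = σ ⟨j, hj⟩ := Fin.ext hval
    have := σ.injective this
    exact Fin.ext (by simpa using congrArg Fin.val this)
  · rw [dif_pos hi, dif_neg hj] at hij
    exfalso
    by_cases h1 : (σ ⟨i, hi⟩ : ℕ) < r.val * d <;>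
      simp [h1, Fin.mk.injEq] at hij <;> omega
  · rw [dif_neg hi, dif_pos hj] at hij
    exfalso
    by_cases h2 : (σ ⟨j, hj⟩ : ℕ) < r.val * d <;>
      simp [h2, Fin.mk.injEq] at hij <;> omega
  · have : (i : ℕ) = (j : ℕ) := by have := i.isLt; have := j.isLt; omega
    exact Fin.ext this

/-- The extension as a permutation. -/
noncomputable def FPerm (n d : ℕ) (r : Fin (n / d + 1)) (σ : Equiv.Perm (Fin n)) :
    Equiv.Perm (Fin (n + 1)) :=
  Equiv.ofBijective (fAux n d r σ) (Finite.injective_iff_bijective.mp (fAux_inj n d r σ))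

lemma FPerm_apply (n d : ℕ) (r : Fin (n / d + 1)) (σ : Equiv.Perm (Fin n))
    (i : Fin (n + 1)) : FPerm n d r σ i = fAux n d r σ i := rfl

lemma dist_ge (n d : ℕ) (hd : 1 ≤ d) (r s : Fin (n / d + 1)) (σ τ : Equiv.Perm (Fin n))
    (hrs : r ≠ s ∨ (r = s ∧ σ ≠ τ ∧ d ≤ permDist σ τ)) :
    d ≤ permDist (FPerm n d r σ) (FPerm n d s τ) := by
  rcases hrs with hrs | ⟨hreq, hne, hdist⟩
  · -- use the last position
    have hval : d ≤ Nat.dist ((FPerm n d r σ (Fin.last n)) : ℕ)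
        ((FPerm n d s τ (Fin.last n)) : ℕ) := by
      rw [FPerm_apply, FPerm_apply]
      unfold fAux
      rw [dif_neg (by simp), dif_neg (by simp)]
      have hrsv : r.val ≠ s.val := fun h => hrs (Fin.ext h)
      simp only [Nat.dist]
      rcases Nat.lt_or_ge r.val s.val with h | h
      · have : r.val + 1 ≤ s.val := h
        have : (r.val + 1) * d ≤ s.val * d := Nat.mul_le_mul_right d this
        simp [add_mul] at this; omega
      · have : s.val + 1 ≤ r.val := by omega
        have : (s.val + 1) * d ≤ r.val * d := Nat.mul_le_mul_right d this
        simp [add_mul] at this; omega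
    exact le_trans hval (Finset.le_sup (f := fun i => Nat.dist ((FPerm n d r σ i : ℕ)) ((FPerm n d s τ i : ℕ))) (Finset.mem_univ _))
  · -- use a witness position from the original code
    subst hreq
    have h0 : (⊥ : ℕ) < d := hd
    rw [permDist, Finset.le_sup_iff h0] at hdist
    obtain ⟨i, -, hi⟩ := hdist
    have hval : d ≤ Nat.dist ((FPerm n d r σ (Fin.castSucc i)) : ℕ)
        ((FPerm n d r τ (Fin.castSucc i)) : ℕ) := by
      rw [FPerm_apply, FPerm_apply]
      unfold fAux
      have hlt : ((Fin.castSucc i : Fin (n+1)) : ℕ) < n := i.isLt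
      rw [dif_pos hlt, dif_pos hlt]
      simp only [Fin.coe_castSucc, Fin.eta]
      simp only [Nat.dist] at hi ⊢
      by_cases h1 : (σ i : ℕ) < r.val * d <;> by_cases h2 : (τ i : ℕ) < r.val * d
      · rw [if_pos h1, if_pos h2]; simp only [Fin.val_mk]; omega
      · rw [if_pos h1, if_neg h2]; simp only [Fin.val_mk]; omega
      · rw [if_neg h1, if_pos h2]; simp only [Fin.val_mk]; omega
      · rw [if_neg h1, if_neg h2]; simp only [Fin.val_mk]; omega
    exact le_trans hval (Finset.le_sup (f := fun j => Nat.dist ((FPerm n d r σ j : ℕ)) ((FPerm n d r τ j : ℕ))) (Finset.mem_univ _))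

lemma permDist_self {n : ℕ} (σ : Equiv.Perm (Fin n)) : permDist σ σ = 0 := by
  unfold permDist
  simp [Nat.dist_self]

/-- If `n > d ≥ 1`, then `P(n+1, d) ≥ (⌊n/d⌋ + 1) · P(n, d)`. -/
theorem stmt0 (n d : ℕ) (hd : 1 ≤ d) (hn : d < n) :
    (n / d + 1) * P n d ≤ P (n + 1) d := by
  classical
  set S : Set ℕ := {k | ∃ A : Finset (Equiv.Perm (Fin n)),
    (∀ σ ∈ A, ∀ τ ∈ A, σ ≠ τ → d ≤ permDist σ τ) ∧ A.card = k} with hS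
  have hne : S.Nonempty := ⟨0, ∅, by simp, by simp⟩
  have hbdd : BddAbove S := by
    refine ⟨Fintype.card (Equiv.Perm (Fin n)), ?_⟩
    rintro k ⟨A, -, rfl⟩
    exact Finset.card_le_univ A
  have hmem : P n d ∈ S := Nat.sSup_mem hne hbdd
  obtain ⟨A, hA, hAcard⟩ := hmem
  -- build the big code
  set F : Fin (n / d + 1) × Equiv.Perm (Fin n) → Equiv.Perm (Fin (n + 1)) :=
    fun p => FPerm n d p.1 p.2 with hF
  set B : Finset (Equiv.Perm (Fin (n + 1))) :=
    (Finset.univ ×ˢ A).image F with hB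
  have key : ∀ p ∈ Finset.univ ×ˢ A, ∀ q ∈ Finset.univ ×ˢ A, p ≠ q →
      d ≤ permDist (F p) (F q) := by
    rintro ⟨r, σ⟩ hp ⟨s, τ⟩ hq hpq
    simp only [Finset.mem_product, Finset.mem_univ, true_and] at hp hq
    by_cases hrs : r = s
    · subst hrs
      have hστ : σ ≠ τ := fun h => hpq (by simp [h])
      exact dist_ge n d hd r r σ τ (Or.inr ⟨rfl, hστ, hA σ hp τ hq hστ⟩)
    · exact dist_ge n d hd r s σ τ (Or.inl hrs)
  have hinj : Set.InjOn F ((Finset.univ ×ˢ A : Finset (Fin (n / d + 1) × Equiv.Perm (Fin n))) : Set (Fin (n / d + 1) × Equiv.Perm (Fin n))) := by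
    intro p hp q hq hpq
    by_contra hne'
    have := key p (Finset.mem_coe.mp hp) q (Finset.mem_coe.mp hq) hne'
    rw [hpq, permDist_self] at this
    omega
  have hBcard : B.card = (n / d + 1) * P n d := by
    rw [hB, Finset.card_image_of_injOn hinj, Finset.card_product]
    simp [hAcard]
  have hBprop : ∀ σ ∈ B, ∀ τ ∈ B, σ ≠ τ → d ≤ permDist σ τ := by
    intro σ hσ τ hτ hστ
    rw [hB, Finset.mem_image] at hσ hτ
    obtain ⟨p, hp, rfl⟩ := hσ
    obtain ⟨q, hq, rfl⟩ := hτ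
    exact key p hp q hq (fun h => hστ (by rw [h]))
  have hmem' : (n / d + 1) * P n d ∈ {k | ∃ A : Finset (Equiv.Perm (Fin (n+1))),
      (∀ σ ∈ A, ∀ τ ∈ A, σ ≠ τ → d ≤ permDist σ τ) ∧ A.card = k} :=
    ⟨B, hBprop, hBcard⟩
  have hbdd' : BddAbove {k | ∃ A : Finset (Equiv.Perm (Fin (n+1))),
      (∀ σ ∈ A, ∀ τ ∈ A, σ ≠ τ → d ≤ permDist σ τ) ∧ A.card = k} := by
    refine ⟨Fintype.card (Equiv.Perm (Fin (n+1))), ?_⟩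
    rintro k ⟨A', -, rfl⟩
    exact Finset.card_le_univ A'
  exact le_csSup hbdd' hmem'
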